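/- For every n ≥ 4, let A'_n be the deterministic finite automaton with state set {0,1,…,n-1}, binary alphabet {a,d}, initial state 0 and final state set {n-1}, where a acts as the cycle (0,1,…,n-2) fixing n-1, and d maps n-2 to n-1 and fixes all other states. Then L(A'_n) is a right ideal with quotient complexity n, and its reverse L(A'_n)^R has quotient complexity exactly 2^{n-1}. -/

import Mathlib

/-- The left quotient of a language `L` by a word `w`: `{x | w ++ x ∈ L}`. -/
def leftQ {α : Type*} (L : Set (List α)) (w : List α) : Set (List α) :=
  {x | w ++ x ∈ L}

/-- Quotient (state) complexity: the number of distinct left quotients of `L`. -/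
noncomputable def quotCompl {α : Type*} (L : Set (List α)) : ℕ :=
  Nat.card (Set.range (leftQ L))

/-- The syntactic (Myhill) congruence of `L`. -/
def synRel {α : Type*} (L : Set (List α)) (x y : List α) : Prop :=
  ∀ u v : List α, u ++ x ++ v ∈ L ↔ u ++ y ++ v ∈ L

/-- The syntactic setoid on the free semigroup of non-empty words. -/
def synSetoid {α : Type*} (L : Set (List α)) : Setoid {w : List α // w ≠ []} :=
  ⟨fun x y => synRel L x.1 y.1,
   ⟨fun _ _ _ => Iff.rfl, fun h u v => (h u v).symm,
    fun h₁ h₂ u v => (h₁ u v).trans (h₂ u v)⟩⟩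

/-- Syntactic complexity: the cardinality of the syntactic semigroup of `L`. -/
noncomputable def synCompl {α : Type*} (L : Set (List α)) : ℕ :=
  Nat.card (Quotient (synSetoid L))

/-- `L` is a right ideal: it is non-empty and `L = LΣ*`. -/
def IsRightIdeal {α : Type*} (L : Set (List α)) : Prop :=
  L.Nonempty ∧ L = {x | ∃ u ∈ L, ∃ v : List α, x = u ++ v}

/-- `L` is a left ideal: it is non-empty and `L = Σ*L`. -/
def IsLeftIdeal {α : Type*} (L : Set (List α)) : Prop :=
  L.Nonempty ∧ L = {x | ∃ u : List α, ∃ v ∈ L, x = u ++ v}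

/-- `L` is a two-sided ideal: it is non-empty and `L = Σ*LΣ*`. -/
def IsTwoSidedIdeal {α : Type*} (L : Set (List α)) : Prop :=
  L.Nonempty ∧ L = {x | ∃ u : List α, ∃ w ∈ L, ∃ v : List α, x = u ++ w ++ v}

/-- The reverse of a language. -/
def langReverse {α : Type*} (L : Set (List α)) : Set (List α) :=
  List.reverse '' L

/-- The transition function of the automaton `𝒜'_n` (the automaton `𝒜_n` of
Definition 1 restricted to the letters `a` and `d`):
`a = (0,1,…,n-2)` fixing `n-1`, and `d : n-2 ↦ n-1`. -/
def step11 (n : ℕ) (hn : 4 ≤ n) : Fin n → Fin 2 → Fin n := fun q l =>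
  if l.val = 0 then -- a : the cycle (0, 1, …, n-2), fixing n-1
    if q.val = n - 2 then ⟨0, by omega⟩
    else if _h : q.val = n - 1 then q
    else ⟨q.val + 1, by have := q.isLt; omega⟩
  else -- d : n-2 ↦ n-1, fixing all other states
    if q.val = n - 2 then ⟨n - 1, by omega⟩ else q

namespace St11
variable (n : ℕ) (hn : 4 ≤ n)

def M : DFA (Fin 2) (Fin n) :=
  { step := step11 n hn, start := ⟨0, by omega⟩, accept := {⟨n - 1, by omega⟩} }

def lastS : Fin n := ⟨n - 1, by omega⟩

lemma step_val (q : Fin n) (l : Fin 2) : ((M n hn).step q l).val =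
    if l.val = 0 then
      (if q.val = n - 2 then 0 else if q.val = n - 1 then n - 1 else q.val + 1)
    else (if q.val = n - 2 then n - 1 else q.val) := by
  show (step11 n hn q l).val = _
  unfold step11
  split_ifs <;> first | rfl | assumption

lemma step_last (l : Fin 2) : (M n hn).step (lastS n hn) l = lastS n hn := by
  have h : (lastS n hn).val = n - 1 := rfl
  apply Fin.ext
  rw [step_val, h]
  split_ifs <;> omega

lemma evalFrom_last (u : List (Fin 2)) : (M n hn).evalFrom (lastS n hn) u = lastS n hn := by
  induction u with
  | nil => rfl
  | cons l u ih =>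
      show (M n hn).evalFrom ((M n hn).step (lastS n hn) l) u = _
      rw [step_last, ih]

lemma mem_accepts (w : List (Fin 2)) :
    w ∈ (M n hn).accepts ↔ (M n hn).eval w = lastS n hn := by
  rw [DFA.mem_accepts]
  exact Set.mem_singleton_iff

lemma evalFrom_replicate (k : ℕ) (q : Fin n) (h : q.val + k ≤ n - 2) :
    (M n hn).evalFrom q (List.replicate k 0) = ⟨q.val + k, by omega⟩ := by
  induction k generalizing q with
  | zero => exact Fin.ext (by simp)
  | succ k ih =>
      rw [List.replicate_succ]
      show (M n hn).evalFrom ((M n hn).step q 0) (List.replicate k 0) = _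
      have hs : (M n hn).step q 0 = ⟨q.val + 1, by omega⟩ := by
        apply Fin.ext
        rw [step_val]
        simp only [Fin.val_zero, if_pos rfl]
        split_ifs <;> omega
      rw [hs, ih _ (by simp; omega)]
      exact Fin.ext (by simp; omega)

lemma step_d (q : Fin n) (h : q.val = n - 2) : (M n hn).step q 1 = lastS n hn := by
  apply Fin.ext
  rw [step_val]
  have : ((1 : Fin 2)).val = 1 := rfl
  rw [this]
  simp only [if_pos h]
  norm_num
  exact rfl

lemma step_d' (q : Fin n) (h : q.val ≠ n - 2) : (M n hn).step q 1 = q := by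
  apply Fin.ext
  rw [step_val]
  norm_num [if_neg h]

lemma reach (q : Fin n) : ∃ w, (M n hn).eval w = q := by
  have hst : ((M n hn).start).val = 0 := rfl
  by_cases h : q.val = n - 1
  · refine ⟨List.replicate (n-2) 0 ++ [1], ?_⟩
    show (M n hn).evalFrom _ _ = q
    rw [DFA.evalFrom_of_append, evalFrom_replicate n hn (n-2) _ (by rw [hst]; omega)]
    rw [DFA.evalFrom_singleton, step_d n hn _ (by simp only [Fin.val_mk]; omega)]
    exact Fin.ext (by simp [lastS]; omega)
  · refine ⟨List.replicate q.val 0, ?_⟩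
    show (M n hn).evalFrom _ _ = q
    rw [evalFrom_replicate n hn _ _ (by rw [hst]; have := q.isLt; omega)]
    exact Fin.ext (by simp only [Fin.val_mk, hst, Nat.zero_add])

def Lq (q : Fin n) : Set (List (Fin 2)) := {x | (M n hn).evalFrom q x = lastS n hn}

lemma leftQ_eq (w : List (Fin 2)) :
    leftQ ((M n hn).accepts : Set (List (Fin 2))) w = Lq n hn ((M n hn).eval w) := by
  ext x
  show w ++ x ∈ (M n hn).accepts ↔ _
  rw [mem_accepts]
  show (M n hn).evalFrom _ (w ++ x) = _ ↔ _
  rw [DFA.evalFrom_of_append]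
  exact Iff.rfl

lemma nil_mem_Lq (q : Fin n) : [] ∈ Lq n hn q ↔ q = lastS n hn := Iff.rfl

lemma distinguish {p q : Fin n} (hp : p.val < q.val) (hq : q.val ≤ n - 2) :
    Lq n hn p ≠ Lq n hn q := by
  intro hEq
  set w : List (Fin 2) := List.replicate (n - 2 - q.val) (0 : Fin 2) ++ [(1 : Fin 2)] with hw
  have hmemq : w ∈ Lq n hn q := by
    show (M n hn).evalFrom q w = lastS n hn
    rw [hw, DFA.evalFrom_of_append,
      evalFrom_replicate n hn _ _ (by omega), DFA.evalFrom_singleton]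
    exact step_d n hn _ (by simp only [Fin.val_mk]; omega)
  have hmemp : w ∉ Lq n hn p := by
    show ¬ (M n hn).evalFrom p w = lastS n hn
    rw [hw, DFA.evalFrom_of_append,
      evalFrom_replicate n hn _ _ (by omega), DFA.evalFrom_singleton,
      step_d' n hn _ (by simp only [Fin.val_mk]; omega)]
    intro hcon
    have := congrArg Fin.val hcon
    simp only [Fin.val_mk, lastS] at this
    omega
  rw [hEq] at hmemp
  exact hmemp hmemq

lemma Lq_inj : Function.Injective (Lq n hn) := by
  intro p q hEq
  by_cases hp : p.val = n - 1 <;> by_cases hq : q.val = n - 1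
  · exact Fin.ext (by omega)
  · exfalso
    have : [] ∈ Lq n hn p := by rw [nil_mem_Lq]; exact Fin.ext hp
    rw [hEq, nil_mem_Lq] at this
    exact hq (congrArg Fin.val this)
  · exfalso
    have : [] ∈ Lq n hn q := by rw [nil_mem_Lq]; exact Fin.ext hq
    rw [← hEq, nil_mem_Lq] at this
    exact hp (congrArg Fin.val this)
  · have hp' := p.isLt
    have hq' := q.isLt
    rcases lt_trichotomy p.val q.val with h | h | h
    · exact absurd hEq (distinguish n hn h (by omega))
    · exact Fin.ext h
    · exact absurd hEq.symm (distinguish n hn h (by omega))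

lemma range_leftQ : Set.range (leftQ ((M n hn).accepts : Set (List (Fin 2))))
    = Set.range (Lq n hn) := by
  ext L
  constructor
  · rintro ⟨w, rfl⟩
    exact ⟨(M n hn).eval w, (leftQ_eq n hn w).symm⟩
  · rintro ⟨q, rfl⟩
    obtain ⟨w, hw⟩ := reach n hn q
    exact ⟨w, by rw [leftQ_eq, hw]⟩

lemma part2 : quotCompl ((M n hn).accepts : Set (List (Fin 2))) = n := by
  show Nat.card (Set.range (leftQ ((M n hn).accepts : Set (List (Fin 2))))) = n
  rw [range_leftQ]
  rw [Nat.card_congr (Equiv.ofInjective _ (Lq_inj n hn)).symm]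
  simp

lemma part1 : IsRightIdeal ((M n hn).accepts : Set (List (Fin 2))) := by
  constructor
  · obtain ⟨w, hw⟩ := reach n hn (lastS n hn)
    exact ⟨w, (mem_accepts n hn w).mpr hw⟩
  · ext x
    constructor
    · intro hx
      exact ⟨x, hx, [], by simp⟩
    · rintro ⟨u, hu, v, rfl⟩
      replace hu := (mem_accepts n hn u).mp hu
      refine (mem_accepts n hn _).mpr ?_
      show (M n hn).evalFrom _ (u ++ v) = _
      rw [DFA.evalFrom_of_append]
      show (M n hn).evalFrom ((M n hn).eval u) v = _
      rw [hu]
      exact evalFrom_last n hn v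

def fa : Fin n → Fin n := fun q => (M n hn).step q 0

lemma fa_inj : Function.Injective (fa n hn) := by
  intro p q h
  have hp := p.isLt
  have hq := q.isLt
  have h' : (((M n hn).step p 0)).val = (((M n hn).step q 0)).val := congrArg Fin.val h
  rw [step_val, step_val] at h'
  simp only [Fin.val_zero, if_pos rfl] at h'
  apply Fin.ext
  split_ifs at h' <;> omega

lemma fa_iter_inj (m : ℕ) : Function.Injective ((fa n hn)^[m]) :=
  Function.Injective.iterate (fa_inj n hn) m

lemma evalFrom_replicate_iter (m : ℕ) (q : Fin n) :
    (M n hn).evalFrom q (List.replicate m 0) = (fa n hn)^[m] q := by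
  induction m generalizing q with
  | zero => rfl
  | succ m ih =>
      rw [List.replicate_succ]
      show (M n hn).evalFrom ((M n hn).step q 0) (List.replicate m 0) = _
      rw [ih, Function.iterate_succ_apply]
      rfl

lemma fa_iter_last (m : ℕ) : (fa n hn)^[m] (lastS n hn) = lastS n hn := by
  rw [← evalFrom_replicate_iter]
  exact evalFrom_last n hn _

def T (u : List (Fin 2)) : Set (Fin n) := {q | (M n hn).evalFrom q u = lastS n hn}

lemma last_mem_T (u : List (Fin 2)) : lastS n hn ∈ T n hn u := evalFrom_last n hn u

lemma T_append (x y : List (Fin 2)) :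
    T n hn (x ++ y) = {q | (M n hn).evalFrom q x ∈ T n hn y} := by
  ext q
  show (M n hn).evalFrom q (x ++ y) = _ ↔ _
  rw [DFA.evalFrom_of_append]
  exact Iff.rfl

lemma T_nil : T n hn [] = {lastS n hn} := rfl

lemma T_d_cons (u : List (Fin 2)) :
    T n hn (1 :: u) = T n hn u ∪ {(⟨n - 2, by omega⟩ : Fin n)} := by
  ext q
  show (M n hn).evalFrom ((M n hn).step q 1) u = _ ↔ _
  by_cases h : q.val = n - 2
  · rw [step_d n hn q h]
    simp only [Set.mem_union, Set.mem_singleton_iff]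
    constructor
    · intro _; exact Or.inr (Fin.ext h)
    · intro _; exact evalFrom_last n hn u
  · rw [step_d' n hn q h]
    simp only [Set.mem_union, Set.mem_singleton_iff]
    constructor
    · exact fun hh => Or.inl hh
    · rintro (hh | hh)
      · exact hh
      · exact absurd (congrArg Fin.val hh) h

lemma T_surj : ∀ k (S : Set (Fin n)), lastS n hn ∈ S → (S \ {lastS n hn}).ncard = k →
    ∃ u, T n hn u = S := by
  intro k
  induction k with
  | zero =>
      intro S hlast hcard
      have hfin : (S \ {lastS n hn}).Finite := Set.toFinite _
      have hempty : S \ {lastS n hn} = ∅ := (Set.ncard_eq_zero hfin).mp hcard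
      refine ⟨[], ?_⟩
      rw [T_nil]
      ext q
      constructor
      · rintro rfl; exact hlast
      · intro hq
        by_contra hne
        exact absurd (Set.mem_diff_singleton.mpr ⟨hq, hne⟩) (by rw [hempty]; exact id)
  | succ k ih =>
      intro S hlast hcard
      obtain ⟨x, hx⟩ := Set.nonempty_of_ncard_ne_zero (s := S \ {lastS n hn}) (by omega)
      obtain ⟨hxS, hxne⟩ := hx
      have hxne' : x.val ≠ n - 1 := fun hc => hxne (Fin.ext hc)
      have hxlt := x.isLt
      set m := n - 2 - x.val with hm
      set g := (fa n hn)^[m] with hg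
      have hginj : Function.Injective g := fa_iter_inj n hn m
      have hgx : g x = ⟨n - 2, by omega⟩ := by
        rw [hg, ← evalFrom_replicate_iter, evalFrom_replicate n hn m x (by omega)]
        exact Fin.ext (by simp; omega)
      have hglast : g (lastS n hn) = lastS n hn := fa_iter_last n hn m
      set n2 : Fin n := ⟨n - 2, by omega⟩ with hn2
      have hn2ne : n2 ≠ lastS n hn := by
        intro hc
        have := congrArg Fin.val hc
        simp only [lastS, Fin.val_mk] at this
        have h3 : n2.val = n - 2 := rfl
        omega
      set S' := g '' S with hS'
      have hlastS' : lastS n hn ∈ S' := ⟨lastS n hn, hlast, hglast⟩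
      have hn2S' : n2 ∈ S' := ⟨x, hxS, hgx⟩
      set S'' := S' \ {n2} with hS''
      have hlastS'' : lastS n hn ∈ S'' := ⟨hlastS', fun hc => hn2ne hc.symm⟩
      have hdiff : S' \ {lastS n hn} = g '' (S \ {lastS n hn}) := by
        ext q
        constructor
        · rintro ⟨⟨p, hpS, rfl⟩, hne⟩
          exact ⟨p, ⟨hpS, fun hc => hne (by rw [Set.mem_singleton_iff] at hc ⊢; rw [hc, hglast])⟩, rfl⟩
        · rintro ⟨p, ⟨hpS, hpne⟩, rfl⟩
          exact ⟨⟨p, hpS, rfl⟩, fun hc => hpne (hginj (by rw [hc, hglast]))⟩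
      have hcard' : (S' \ {lastS n hn}).ncard = k + 1 := by
        rw [hdiff, Set.ncard_image_of_injective _ hginj, hcard]
      have hn2mem : n2 ∈ S' \ {lastS n hn} := ⟨hn2S', hn2ne⟩
      have hcard'' : (S'' \ {lastS n hn}).ncard = k := by
        have hcomm : S'' \ {lastS n hn} = (S' \ {lastS n hn}) \ {n2} := by
          ext q; constructor
          · rintro ⟨⟨h1, h2⟩, h3⟩; exact ⟨⟨h1, h3⟩, h2⟩
          · rintro ⟨⟨h1, h2⟩, h3⟩; exact ⟨⟨h1, h3⟩, h2⟩
        rw [hcomm, Set.ncard_diff_singleton_of_mem hn2mem, hcard']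
        omega
      obtain ⟨u, hu⟩ := ih S'' hlastS'' hcard''
      refine ⟨List.replicate m 0 ++ 1 :: u, ?_⟩
      rw [T_append]
      have hTu : T n hn (1 :: u) = S' := by
        rw [T_d_cons, hu, hS'']
        rw [Set.diff_union_self]
        exact (Set.union_eq_self_of_subset_right (Set.singleton_subset_iff.mpr hn2S')).symm ▸
          Set.union_eq_self_of_subset_right (Set.singleton_subset_iff.mpr hn2S')
      rw [hTu]
      ext q
      simp only [Set.mem_setOf_eq]
      rw [evalFrom_replicate_iter, ← hg]
      constructor
      · rintro ⟨p, hpS, hpq⟩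
        rwa [← hginj hpq]
      · intro hq
        exact ⟨q, hq, rfl⟩

lemma range_T : Set.range (T n hn) = {S : Set (Fin n) | lastS n hn ∈ S} := by
  ext S
  constructor
  · rintro ⟨u, rfl⟩
    exact last_mem_T n hn u
  · intro hS
    obtain ⟨u, hu⟩ := T_surj n hn ((S \ {lastS n hn}).ncard) S hS rfl
    exact ⟨u, hu⟩

def G (S : Set (Fin n)) : Set (List (Fin 2)) := {x | (M n hn).eval x.reverse ∈ S}

lemma G_inj : Function.Injective (G n hn) := by
  intro S S' h
  ext q
  obtain ⟨w, hw⟩ := reach n hn q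
  have h1 : w.reverse ∈ G n hn S ↔ q ∈ S := by
    rw [G, Set.mem_setOf_eq, List.reverse_reverse, hw]
  have h2 : w.reverse ∈ G n hn S' ↔ q ∈ S' := by
    rw [G, Set.mem_setOf_eq, List.reverse_reverse, hw]
  rw [← h1, ← h2, h]

lemma leftQ_rev (w : List (Fin 2)) :
    leftQ (langReverse ((M n hn).accepts : Set (List (Fin 2)))) w = G n hn (T n hn w.reverse) := by
  ext x
  show w ++ x ∈ langReverse _ ↔ _
  constructor
  · rintro ⟨y, hy, hyr⟩
    have : y = (w ++ x).reverse := by rw [← hyr, List.reverse_reverse]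
    subst this
    replace hy := (mem_accepts n hn _).mp hy
    rw [List.reverse_append] at hy
    replace hy : (M n hn).evalFrom (M n hn).start (x.reverse ++ w.reverse) = lastS n hn := hy
    rw [DFA.evalFrom_of_append] at hy
    exact hy
  · intro hx
    refine ⟨(w ++ x).reverse, ?_, List.reverse_reverse _⟩
    refine (mem_accepts n hn _).mpr ?_
    rw [List.reverse_append]
    show (M n hn).evalFrom _ (x.reverse ++ w.reverse) = _
    rw [DFA.evalFrom_of_append]
    exact hx

lemma range_leftQ_rev :
    Set.range (leftQ (langReverse ((M n hn).accepts : Set (List (Fin 2)))))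
      = G n hn '' Set.range (T n hn) := by
  ext L
  constructor
  · rintro ⟨w, rfl⟩
    exact ⟨T n hn w.reverse, ⟨w.reverse, rfl⟩, (leftQ_rev n hn w).symm⟩
  · rintro ⟨S, ⟨u, rfl⟩, rfl⟩
    refine ⟨u.reverse, ?_⟩
    rw [leftQ_rev, List.reverse_reverse]

noncomputable def cardEquiv : {S : Set (Fin n) // lastS n hn ∈ S} ≃ Set {q : Fin n // q ≠ lastS n hn} where
  toFun S := {q | q.1 ∈ S.1}
  invFun T := ⟨{q | q = lastS n hn ∨ ∃ h : q ≠ lastS n hn, (⟨q, h⟩ : {q : Fin n // q ≠ lastS n hn}) ∈ T},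
    Or.inl rfl⟩
  left_inv := by
    rintro ⟨S, hS⟩
    ext q
    simp only [Set.mem_setOf_eq]
    constructor
    · rintro (rfl | ⟨h, hq⟩)
      · exact hS
      · exact hq
    · intro hq
      by_cases h : q = lastS n hn
      · exact Or.inl h
      · exact Or.inr ⟨h, hq⟩
  right_inv := by
    intro T
    ext ⟨q, hq⟩
    simp only [Set.mem_setOf_eq]
    constructor
    · rintro (rfl | ⟨h, hmem⟩)
      · exact absurd rfl hq
      · exact hmem
    · intro hmem
      exact Or.inr ⟨hq, hmem⟩

lemma card_subsets : Nat.card {S : Set (Fin n) | lastS n hn ∈ S} = 2 ^ (n - 1) := by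
  have h1 : Nat.card {S : Set (Fin n) | lastS n hn ∈ S}
      = Nat.card (Set {q : Fin n // q ≠ lastS n hn}) := Nat.card_congr (cardEquiv n hn)
  rw [h1, Nat.card_eq_fintype_card, Fintype.card_set]
  congr 1
  rw [Fintype.card_subtype_compl, Fintype.card_fin, Fintype.card_subtype_eq]

lemma part3 : quotCompl (langReverse ((M n hn).accepts : Set (List (Fin 2)))) = 2 ^ (n - 1) := by
  rw [quotCompl, range_leftQ_rev]
  rw [Nat.card_congr (Equiv.Set.imageOfInjOn _ _ ((G_inj n hn).injOn)).symm]
  rw [Nat.card_congr (Equiv.setCongr (range_T n hn))]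
  exact card_subsets n hn

end St11

/-- For `n ≥ 4`, the binary automaton `𝒜'_n` accepts a right
ideal with quotient complexity `n`, and the reverse of this language has
quotient complexity exactly `2^{n-1}`. -/
theorem stmt_11 (n : ℕ) (hn : 4 ≤ n) :
    let M : DFA (Fin 2) (Fin n) :=
      { step := step11 n hn, start := ⟨0, by omega⟩, accept := {⟨n - 1, by omega⟩} }
    IsRightIdeal (M.accepts : Set (List (Fin 2))) ∧
    quotCompl (M.accepts : Set (List (Fin 2))) = n ∧
    quotCompl (langReverse (M.accepts : Set (List (Fin 2)))) = 2 ^ (n - 1) := by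
  exact ⟨St11.part1 n hn, St11.part2 n hn, St11.part3 n hn⟩
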